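/- arXiv:1104.3592 — 4 statements merged into one kernel-verified Lean document; each statement's English description precedes it below -/
import Mathlib

section
/- Let H ∈ C²(0,∞) have a local minimum at w̄ with H'(w̄)=0 and H''(w̄) > 0, and suppose H is strictly decreasing on (0, w̄) and strictly increasing just above w̄. For E slightly above H(w̄), with w₁(E) < w̄ < w₂(E) the points where H = E, the period integral T(E) = ∫_{w₁(E)}^{w₂(E)} dy/√(2(E − H(y))) satisfies lim_{E → H(w̄)⁺} T(E) = π/√(H''(w̄)). -/
open Filter Set MeasureTheory intervalIntegral Real

private lemma inv_sqrt_mono {u v : ℝ} (hu : 0 < u) (huv : u ≤ v) :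
    (Real.sqrt v)⁻¹ ≤ (Real.sqrt u)⁻¹ :=
  inv_anti₀ (Real.sqrt_pos.2 hu) (Real.sqrt_le_sqrt huv)

private lemma aux_f0_int : ∀ p q : ℝ, p ∈ Icc (-1:ℝ) 1 → q ∈ Icc (-1:ℝ) 1 →
    IntervalIntegrable (fun x => (Real.sqrt (1 - x^2))⁻¹) volume p q := by
  have base : ∀ c ∈ Icc (0:ℝ) 1,
      IntervalIntegrable (fun x => (Real.sqrt (1 - x^2))⁻¹) volume 0 c := by
    intro c hc
    have hmaj : IntervalIntegrable (fun x => (1 - x) ^ (-(1/2) : ℝ)) volume 0 c := by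
      have := (intervalIntegrable_rpow' (a := (1:ℝ)) (b := 1 - c)
        (r := -(1/2)) (by norm_num)).comp_sub_left 1
      simpa using this
    refine hmaj.mono_fun ?_ ?_
    · exact (((continuous_const.sub (continuous_pow 2)).sqrt).measurable.inv).aestronglyMeasurable
    · refine ((ae_restrict_iff' measurableSet_uIoc).2 (ae_of_all _ fun x hx => ?_) :
        ∀ᵐ x ∂(volume.restrict (Set.uIoc 0 c)), ‖(Real.sqrt (1 - x^2))⁻¹‖ ≤ ‖(1 - x) ^ (-(1/2) : ℝ)‖)
      rw [uIoc_of_le hc.1] at hx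
      obtain ⟨hx0, hx1⟩ := hx
      have hx1' : x ≤ 1 := hx1.trans hc.2
      have h1 : 0 ≤ (Real.sqrt (1 - x^2))⁻¹ := inv_nonneg.2 (Real.sqrt_nonneg _)
      have h2 : 0 ≤ (1 - x) ^ (-(1/2) : ℝ) := Real.rpow_nonneg (by linarith) _
      rw [Real.norm_eq_abs, Real.norm_eq_abs, abs_of_nonneg h1, abs_of_nonneg h2]
      rcases eq_or_lt_of_le hx1' with h | h
      · subst h
        simp [Real.zero_rpow (show (-(1/2) : ℝ) ≠ 0 by norm_num)]
      · have h3 : (1 - x) ^ (-(1/2) : ℝ) = (Real.sqrt (1 - x))⁻¹ := by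
          rw [Real.rpow_neg (by linarith), Real.sqrt_eq_rpow]
        rw [h3]
        exact inv_sqrt_mono (by linarith) (by nlinarith)
  have key : ∀ p ∈ Icc (-1:ℝ) 1,
      IntervalIntegrable (fun x => (Real.sqrt (1 - x^2))⁻¹) volume 0 p := by
    intro p hp
    rcases le_or_gt 0 p with h | h
    · exact base p ⟨h, hp.2⟩
    · have h1 := base (-p) ⟨by linarith [hp.1], by linarith [hp.1]⟩
      have h2 := (IntervalIntegrable.iff_comp_neg (by simp)).mp h1
      simp only [neg_neg, neg_zero] at h2
      have : (fun x : ℝ => (Real.sqrt (1 - (-x)^2))⁻¹)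
          = fun x => (Real.sqrt (1 - x^2))⁻¹ := by
        funext x; rw [neg_pow]; norm_num
      rw [this] at h2
      exact h2
  exact fun p q hp hq => (key p hp).symm.trans (key q hq)

private lemma aux_f0_val {p q : ℝ} (hp : -1 ≤ p) (hpq : p ≤ q) (hq : q ≤ 1) :
    ∫ x in p..q, (Real.sqrt (1 - x^2))⁻¹ = Real.arcsin q - Real.arcsin p := by
  rcases eq_or_lt_of_le hpq with rfl | hlt
  · simp
  · refine integral_eq_sub_of_hasDerivAt_of_tendsto hlt (fun x hx => ?_)
      (aux_f0_int p q ⟨hp, by linarith⟩ ⟨by linarith, hq⟩)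
      ((Real.continuous_arcsin.tendsto p).mono_left nhdsWithin_le_nhds)
      ((Real.continuous_arcsin.tendsto q).mono_left nhdsWithin_le_nhds)
    have := Real.hasDerivAt_arcsin (x := x) (by intro h; rw [h] at hx; exact absurd hx.1 (by linarith [hx.2]) )
      (by intro h; rw [h] at hx; exact absurd hx.2 (by linarith [hx.1]))
    simpa [one_div] using this

private lemma aux_id {c e : ℝ} (hc : 0 < c) (he : 0 < e) (t : ℝ) :
    (Real.sqrt (2*(e - c*t^2)))⁻¹
      = (Real.sqrt (2*e))⁻¹ * (Real.sqrt (1 - (Real.sqrt (c/e) * t)^2))⁻¹ := by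
  have h1 : (Real.sqrt (c/e) * t)^2 = (c/e) * t^2 := by
    rw [mul_pow, Real.sq_sqrt (by positivity)]
  have h2 : 2*(e - c*t^2) = (2*e) * (1 - (c/e)*t^2) := by
    field_simp
  rw [h1, h2, Real.sqrt_mul (by positivity), mul_inv]

private lemma aux_mem {c e wb : ℝ} (hc : 0 < c) (he : 0 < e) {x : ℝ}
    (hx : c*(x-wb)^2 ≤ e) : Real.sqrt (c/e) * (x - wb) ∈ Icc (-1:ℝ) 1 := by
  have h1 : (Real.sqrt (c/e) * (x-wb))^2 ≤ 1 := by
    rw [mul_pow, Real.sq_sqrt (by positivity), div_mul_eq_mul_div, div_le_one he]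
    linarith
  constructor <;> nlinarith

private lemma aux_int {c e wb p q : ℝ} (hc : 0 < c) (he : 0 < e)
    (hp : c*(p-wb)^2 ≤ e) (hq : c*(q-wb)^2 ≤ e) :
    IntervalIntegrable (fun y => (Real.sqrt (2*(e - c*(y-wb)^2)))⁻¹) volume p q := by
  set k := Real.sqrt (c/e) with hk
  have hk0 : 0 < k := Real.sqrt_pos.2 (by positivity)
  have h0 := aux_f0_int (k*(p-wb)) (k*(q-wb)) (aux_mem hc he hp) (aux_mem hc he hq)
  have h1 := h0.comp_mul_left (c := k)
  rw [mul_div_cancel_left₀ _ hk0.ne', mul_div_cancel_left₀ _ hk0.ne'] at h1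
  have h2 := h1.comp_sub_right wb
  rw [sub_add_cancel, sub_add_cancel] at h2
  have h3 := h2.const_mul (Real.sqrt (2*e))⁻¹
  have hfun : (fun y => (Real.sqrt (2*(e - c*(y-wb)^2)))⁻¹)
      = fun y => (Real.sqrt (2*e))⁻¹ * (Real.sqrt (1 - (k*(y-wb))^2))⁻¹ :=
    funext fun y => aux_id hc he _
  rw [hfun]
  exact h3

private lemma aux_val {c e wb p q : ℝ} (hc : 0 < c) (he : 0 < e) (hpq : p ≤ q)
    (hp : c*(p-wb)^2 ≤ e) (hq : c*(q-wb)^2 ≤ e) :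
    ∫ y in p..q, (Real.sqrt (2*(e - c*(y-wb)^2)))⁻¹
      = (Real.sqrt (2*c))⁻¹ * (Real.arcsin (Real.sqrt (c/e) * (q-wb))
          - Real.arcsin (Real.sqrt (c/e) * (p-wb))) := by
  set k := Real.sqrt (c/e) with hk
  have hk0 : 0 < k := Real.sqrt_pos.2 (by positivity)
  have hfun : ∀ y : ℝ, (Real.sqrt (2*(e - c*(y-wb)^2)))⁻¹
      = (Real.sqrt (2*e))⁻¹ * (Real.sqrt (1 - (k*y + -(k*wb))^2))⁻¹ := by
    intro y
    rw [aux_id hc he (y - wb), show k*(y-wb) = k*y + -(k*wb) from by ring]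
  have hmp := aux_mem hc he hp
  have hmq := aux_mem hc he hq
  calc ∫ y in p..q, (Real.sqrt (2*(e - c*(y-wb)^2)))⁻¹
      = ∫ y in p..q, (Real.sqrt (2*e))⁻¹ * (Real.sqrt (1 - (k*y + -(k*wb))^2))⁻¹ := by
        simp only [hfun]
    _ = (Real.sqrt (2*e))⁻¹ * ∫ y in p..q, (fun x => (Real.sqrt (1 - x^2))⁻¹) (k*y + -(k*wb)) := by
        rw [intervalIntegral.integral_const_mul]
    _ = (Real.sqrt (2*e))⁻¹ * (k⁻¹ • ∫ x in (k*p + -(k*wb))..(k*q + -(k*wb)), (Real.sqrt (1 - x^2))⁻¹) := by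
        congr 1
        exact intervalIntegral.integral_comp_mul_add (fun x => (Real.sqrt (1 - x^2))⁻¹)
          hk0.ne' (-(k*wb))
    _ = (Real.sqrt (2*c))⁻¹ * (Real.arcsin (k*(q-wb)) - Real.arcsin (k*(p-wb))) := by
        have harg1 : k*p + -(k*wb) = k*(p-wb) := by ring
        have harg2 : k*q + -(k*wb) = k*(q-wb) := by ring
        rw [harg1, harg2, aux_f0_val hmp.1 (by nlinarith [hk0.le]) hmq.2]
        have hke : Real.sqrt (2*e) * k = Real.sqrt (2*c) := by
          rw [hk, ← Real.sqrt_mul (by positivity)]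
          congr 1
          field_simp
        rw [smul_eq_mul, ← mul_assoc, ← mul_inv, hke]

set_option maxHeartbeats 1000000 in
/-- As the energy `E` decreases to the local minimum value `H(w̄)`, the period integral
`T(E) = ∫_{w₁(E)}^{w₂(E)} dy/√(2(E − H(y)))` converges to `π/√(H''(w̄))`. -/
theorem stmt7 (H : ℝ → ℝ) (wb : ℝ) (hwb : 0 < wb)
    (hC2 : ContDiffOn ℝ 2 H (Set.Ioi 0))
    (hd0 : deriv H wb = 0) (hdd : 0 < deriv (deriv H) wb)
    (hanti : StrictAntiOn H (Set.Ioo 0 wb))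
    (hmono : ∃ ε > 0, StrictMonoOn H (Set.Ico wb (wb + ε)))
    (w1 w2 : ℝ → ℝ) (δ : ℝ) (hδ : 0 < δ)
    (hw : ∀ E ∈ Set.Ioo (H wb) (H wb + δ),
      0 < w1 E ∧ w1 E < wb ∧ wb < w2 E ∧
      H (w1 E) = E ∧ H (w2 E) = E ∧
      deriv H (w1 E) ≠ 0 ∧ deriv H (w2 E) ≠ 0 ∧
      ∀ y ∈ Set.Ioo (w1 E) (w2 E), H y < E) :
    Filter.Tendsto
      (fun E => ∫ y in (w1 E)..(w2 E), (Real.sqrt (2 * (E - H y)))⁻¹)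
      (nhdsWithin (H wb) (Set.Ioi (H wb)))
      (nhds (Real.pi / Real.sqrt (deriv (deriv H) wb))) := by
  clear hanti hmono
  set A := deriv (deriv H) wb with hAdef
  have hopen : IsOpen (Set.Ioi (0:ℝ)) := isOpen_Ioi
  -- basic derivative facts
  have hH' : ∀ x ∈ Set.Ioi (0:ℝ), HasDerivAt H (deriv H x) x := fun x hx =>
    ((hC2.contDiffAt (hopen.mem_nhds hx)).differentiableAt (by norm_num)).hasDerivAt
  have hC1g : ContDiffOn ℝ 1 (deriv H) (Set.Ioi 0) := by
    have h := (contDiffOn_succ_iff_deriv_of_isOpen (n := 1) hopen).mp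
      (by exact_mod_cast hC2 : ContDiffOn ℝ (1+1) H (Set.Ioi 0))
    exact h.2.2
  have hg' : ∀ x ∈ Set.Ioi (0:ℝ), HasDerivAt (deriv H) (deriv (deriv H) x) x := fun x hx =>
    ((hC1g.contDiffAt (hopen.mem_nhds hx)).differentiableAt (by norm_num)).hasDerivAt
  have hg'cont : ContinuousOn (deriv (deriv H)) (Set.Ioi 0) := by
    have h := (contDiffOn_succ_iff_deriv_of_isOpen (n := 0) hopen).mp
      (by exact_mod_cast hC1g : ContDiffOn ℝ (0+1) (deriv H) (Set.Ioi 0))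
    exact h.2.2.continuousOn
  have hgcont : ContinuousOn (deriv H) (Set.Ioi 0) := fun x hx =>
    (hg' x hx).continuousAt.continuousWithinAt
  have hHcont : ContinuousOn H (Set.Ioi 0) := fun x hx =>
    (hH' x hx).continuousAt.continuousWithinAt
  have hsqrtA : 0 < Real.sqrt A := Real.sqrt_pos.2 hdd
  rw [Metric.tendsto_nhds]
  intro ε hε
  -- choose η
  have hUcont : ContinuousAt (fun η : ℝ => Real.pi / Real.sqrt (A - η)) 0 := by
    refine continuousAt_const.div
      ((Real.continuous_sqrt.comp (continuous_const.sub continuous_id)).continuousAt) ?_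
    simpa using hsqrtA.ne'
  have hLcont : ContinuousAt
      (fun η : ℝ => 2 / Real.sqrt (A - η) * Real.arcsin (Real.sqrt ((A-η)/(A+η)))) 0 := by
    refine ContinuousAt.mul
      (continuousAt_const.div
        ((Real.continuous_sqrt.comp (continuous_const.sub continuous_id)).continuousAt)
        (by simpa using hsqrtA.ne'))
      (Real.continuous_arcsin.continuousAt.comp
        (Real.continuous_sqrt.continuousAt.comp (ContinuousAt.div
          ((continuous_const.sub continuous_id).continuousAt)
          ((continuous_const.add continuous_id).continuousAt)
          (by simpa using hdd.ne'))))
  have hU0 : (fun η : ℝ => Real.pi / Real.sqrt (A - η)) 0 = Real.pi / Real.sqrt A := by norm_num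
  have hL0 : (fun η : ℝ => 2 / Real.sqrt (A - η) * Real.arcsin (Real.sqrt ((A-η)/(A+η)))) 0
      = Real.pi / Real.sqrt A := by
    simp only [sub_zero, add_zero, div_self hdd.ne', Real.sqrt_one, Real.arcsin_one]
    field_simp
  have hUev : ∀ᶠ η in nhdsWithin (0:ℝ) (Set.Ioi 0),
      |Real.pi / Real.sqrt (A - η) - Real.pi / Real.sqrt A| < ε/2 := by
    have h1 : Filter.Tendsto (fun η : ℝ => Real.pi / Real.sqrt (A - η))
        (nhdsWithin (0:ℝ) (Set.Ioi 0)) (nhds ((fun η : ℝ => Real.pi / Real.sqrt (A - η)) 0)) :=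
      hUcont.tendsto.mono_left nhdsWithin_le_nhds
    rw [hU0] at h1
    have := Metric.tendsto_nhds.mp h1 (ε/2) (half_pos hε)
    simpa [Real.dist_eq] using this
  have hLev : ∀ᶠ η in nhdsWithin (0:ℝ) (Set.Ioi 0),
      |2 / Real.sqrt (A - η) * Real.arcsin (Real.sqrt ((A-η)/(A+η)))
        - Real.pi / Real.sqrt A| < ε/2 := by
    have h1 : Filter.Tendsto
        (fun η : ℝ => 2 / Real.sqrt (A - η) * Real.arcsin (Real.sqrt ((A-η)/(A+η))))
        (nhdsWithin (0:ℝ) (Set.Ioi 0))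
        (nhds ((fun η : ℝ => 2 / Real.sqrt (A - η) * Real.arcsin (Real.sqrt ((A-η)/(A+η)))) 0)) :=
      hLcont.tendsto.mono_left nhdsWithin_le_nhds
    rw [hL0] at h1
    have := Metric.tendsto_nhds.mp h1 (ε/2) (half_pos hε)
    simpa [Real.dist_eq] using this
  have hAev : ∀ᶠ η in nhdsWithin (0:ℝ) (Set.Ioi 0), η < A :=
    (eventually_lt_nhds hdd).filter_mono nhdsWithin_le_nhds
  have hposev : ∀ᶠ η in nhdsWithin (0:ℝ) (Set.Ioi 0), (0:ℝ) < η := self_mem_nhdsWithin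
  obtain ⟨η, hUη, hLη, hηA, hη0⟩ := (hUev.and (hLev.and (hAev.and hposev))).exists
  obtain ⟨c1, hc1def⟩ : ∃ x : ℝ, x = (A - η)/2 := ⟨_, rfl⟩
  obtain ⟨c2, hc2def⟩ : ∃ x : ℝ, x = (A + η)/2 := ⟨_, rfl⟩
  have hc1 : 0 < c1 := by rw [hc1def]; linarith
  have hc2 : 0 < c2 := by rw [hc2def]; linarith
  have hc12 : c1 < c2 := by rw [hc1def, hc2def]; linarith
  -- choose r
  have hg'at : ContinuousAt (deriv (deriv H)) wb :=
    hg'cont.continuousAt (hopen.mem_nhds hwb)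
  have hev1 : ∀ᶠ s in nhds wb, |deriv (deriv H) s - A| < η := by
    have := Metric.tendsto_nhds.mp hg'at.tendsto η hη0
    simpa [Real.dist_eq] using this
  have hev2 : ∀ᶠ s in nhds wb, 0 < s := eventually_gt_nhds hwb
  obtain ⟨r, hr0, hball⟩ := Metric.nhds_basis_closedBall.eventually_iff.mp (hev1.and hev2)
  have hIcc : ∀ s ∈ Set.Icc (wb - r) (wb + r), 0 < s ∧ |deriv (deriv H) s - A| < η := by
    intro s hs
    have := hball (show s ∈ Metric.closedBall wb r by rw [Real.closedBall_eq_Icc]; exact hs)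
    exact ⟨this.2, this.1⟩
  have hIccpos : Set.Icc (wb - r) (wb + r) ⊆ Set.Ioi (0:ℝ) := fun s hs => (hIcc s hs).1
  -- MVT: deriv H s = d * (s - wb) with d ∈ [2c1, 2c2]
  have hMVT : ∀ s ∈ Set.Icc (wb - r) (wb + r),
      ∃ d, (2*c1 ≤ d ∧ d ≤ 2*c2) ∧ deriv H s = d * (s - wb) := by
    intro s hs
    have hconts : ∀ a b, Set.Icc a b ⊆ Set.Icc (wb - r) (wb + r) →
        ContinuousOn (deriv H) (Set.Icc a b) := fun a b hsub =>
      hgcont.mono (hsub.trans hIccpos)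
    have hwbm : wb ∈ Set.Icc (wb - r) (wb + r) := ⟨by linarith, by linarith⟩
    rcases lt_trichotomy s wb with hlt | heq | hgt
    · have hsub : Set.Icc s wb ⊆ Set.Icc (wb - r) (wb + r) :=
        Set.Icc_subset_Icc hs.1 (by linarith)
      obtain ⟨ξ, hξ, hsl⟩ := exists_hasDerivAt_eq_slope (deriv H) (deriv (deriv H)) hlt
        (hconts s wb hsub)
        (fun x hx => hg' x (hIccpos (hsub ⟨hx.1.le, hx.2.le⟩)))
      have hξm := (hIcc ξ (hsub ⟨hξ.1.le, hξ.2.le⟩)).2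
      rw [abs_lt] at hξm
      refine ⟨deriv (deriv H) ξ, ⟨by rw [hc1def]; linarith, by rw [hc2def]; linarith⟩, ?_⟩
      have hne : wb - s ≠ 0 := by linarith
      rw [hd0] at hsl
      field_simp at hsl
      linarith [hsl]
    · refine ⟨2*c1, ⟨le_rfl, by linarith⟩, ?_⟩
      rw [heq, hd0]; ring
    · have hsub : Set.Icc wb s ⊆ Set.Icc (wb - r) (wb + r) :=
        Set.Icc_subset_Icc (by linarith) hs.2
      obtain ⟨ξ, hξ, hsl⟩ := exists_hasDerivAt_eq_slope (deriv H) (deriv (deriv H)) hgt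
        (hconts wb s hsub)
        (fun x hx => hg' x (hIccpos (hsub ⟨hx.1.le, hx.2.le⟩)))
      have hξm := (hIcc ξ (hsub ⟨hξ.1.le, hξ.2.le⟩)).2
      rw [abs_lt] at hξm
      refine ⟨deriv (deriv H) ξ, ⟨by rw [hc1def]; linarith, by rw [hc2def]; linarith⟩, ?_⟩
      have hne : s - wb ≠ 0 := by linarith
      rw [hd0] at hsl
      field_simp at hsl
      linarith [hsl]
  -- FTC for H over subintervals of the good interval
  have hFTC : ∀ a b : ℝ, a ∈ Set.Icc (wb - r) (wb + r) → b ∈ Set.Icc (wb - r) (wb + r) →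
      ∫ s in a..b, deriv H s = H b - H a := by
    intro a b ha hb
    have hsub : Set.uIcc a b ⊆ Set.Icc (wb - r) (wb + r) := Set.uIcc_subset_Icc ha hb
    exact intervalIntegral.integral_eq_sub_of_hasDerivAt
      (fun x hx => hH' x (hIccpos (hsub hx)))
      ((hgcont.mono (hsub.trans hIccpos)).intervalIntegrable)
  have hpoly : ∀ (c a b : ℝ), ∫ s in a..b, 2*c*(s - wb) = c*(b - wb)^2 - c*(a - wb)^2 := by
    intro c a b
    have hd : ∀ s : ℝ, HasDerivAt (fun t => c*(t - wb)^2) (2*c*(s - wb)) s := by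
      intro s
      have := (((hasDerivAt_id s).sub_const wb).pow 2).const_mul c
      refine this.congr_deriv ?_
      simp only [id_eq, Nat.cast_ofNat, mul_one, Nat.add_one_sub_one, pow_one]
      ring
    rw [intervalIntegral.integral_eq_sub_of_hasDerivAt (fun x _ => hd x)
      (((continuous_const.mul ((continuous_id.sub continuous_const)))).intervalIntegrable a b)]
  have hgint : ∀ a b : ℝ, a ∈ Set.Icc (wb - r) (wb + r) → b ∈ Set.Icc (wb - r) (wb + r) →
      IntervalIntegrable (deriv H) volume a b := fun a b ha hb =>
    (hgcont.mono ((Set.uIcc_subset_Icc ha hb).trans hIccpos)).intervalIntegrable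
  have hpint : ∀ (c a b : ℝ), IntervalIntegrable (fun s => 2*c*(s - wb)) volume a b :=
    fun c a b => ((continuous_const.mul (continuous_id.sub continuous_const))).intervalIntegrable a b
  have hwbm : wb ∈ Set.Icc (wb - r) (wb + r) := ⟨by linarith, by linarith⟩
  -- two-sided quadratic bounds
  have hQ : ∀ y ∈ Set.Icc (wb - r) (wb + r),
      c1*(y - wb)^2 ≤ H y - H wb ∧ H y - H wb ≤ c2*(y - wb)^2 := by
    intro y hy
    rcases le_total wb y with h | h
    · have hint := hFTC wb y hwbm hy
      have hlow : ∫ s in wb..y, 2*c1*(s - wb) ≤ ∫ s in wb..y, deriv H s := by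
        refine intervalIntegral.integral_mono_on h (hpint c1 wb y) (hgint wb y hwbm hy) ?_
        intro s hs
        obtain ⟨d, hd, heq⟩ := hMVT s ⟨by linarith [hs.1, hy.1], by linarith [hs.2, hy.2]⟩
        rw [heq]
        exact mul_le_mul_of_nonneg_right hd.1 (by linarith [hs.1])
      have hhigh : ∫ s in wb..y, deriv H s ≤ ∫ s in wb..y, 2*c2*(s - wb) := by
        refine intervalIntegral.integral_mono_on h (hgint wb y hwbm hy) (hpint c2 wb y) ?_
        intro s hs
        obtain ⟨d, hd, heq⟩ := hMVT s ⟨by linarith [hs.1, hy.1], by linarith [hs.2, hy.2]⟩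
        rw [heq]
        exact mul_le_mul_of_nonneg_right hd.2 (by linarith [hs.1])
      rw [hint] at hlow hhigh
      rw [hpoly] at hlow hhigh
      norm_num at hlow hhigh
      constructor <;> linarith
    · have hint := hFTC y wb hy hwbm
      have hlow : ∫ s in y..wb, 2*c2*(s - wb) ≤ ∫ s in y..wb, deriv H s := by
        refine intervalIntegral.integral_mono_on h (hpint c2 y wb) (hgint y wb hy hwbm) ?_
        intro s hs
        obtain ⟨d, hd, heq⟩ := hMVT s ⟨by linarith [hs.1, hy.1], by linarith [hs.2, hy.2]⟩
        rw [heq]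
        exact mul_le_mul_of_nonpos_right hd.2 (by linarith [hs.2])
      have hhigh : ∫ s in y..wb, deriv H s ≤ ∫ s in y..wb, 2*c1*(s - wb) := by
        refine intervalIntegral.integral_mono_on h (hgint y wb hy hwbm) (hpint c1 y wb) ?_
        intro s hs
        obtain ⟨d, hd, heq⟩ := hMVT s ⟨by linarith [hs.1, hy.1], by linarith [hs.2, hy.2]⟩
        rw [heq]
        exact mul_le_mul_of_nonpos_right hd.1 (by linarith [hs.2])
      rw [hint] at hlow hhigh
      rw [hpoly] at hlow hhigh
      norm_num at hlow hhigh
      constructor <;> linarith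
  -- the eventual set of energies
  have hm : 0 < min δ (c1*r^2) := lt_min hδ (by positivity)
  filter_upwards [Ioo_mem_nhdsGT_of_mem
    (show H wb ∈ Set.Ico (H wb) (H wb + min δ (c1*r^2)) from ⟨le_refl _, by linarith⟩)]
    with E hE
  obtain ⟨hE1, hE2⟩ := hE
  obtain ⟨hw1pos, hw1lt, hw2gt, hHw1, hHw2, -, -, hbelow⟩ :=
    hw E ⟨hE1, lt_of_lt_of_le hE2 (by linarith [min_le_left δ (c1*r^2)])⟩
  have hE'pos : 0 < E - H wb := by linarith
  have hE'lt : E - H wb < c1*r^2 := by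
    have := min_le_right δ (c1*r^2); linarith
  -- location of w1 E and w2 E
  have hw2r : w2 E < wb + r := by
    by_contra hcon
    push_neg at hcon
    have hyr : c1*r^2 ≤ H (wb + r) - H wb := by
      have := (hQ (wb + r) ⟨by linarith, le_refl _⟩).1
      simpa using this
    rcases eq_or_lt_of_le hcon with heq | hlt
    · rw [← heq] at hHw2; linarith
    · have := hbelow (wb + r) ⟨by linarith, hlt⟩
      linarith
  have hw1r : wb - r < w1 E := by
    by_contra hcon
    push_neg at hcon
    have hyr : c1*r^2 ≤ H (wb - r) - H wb := by
      have := (hQ (wb - r) ⟨le_refl _, by linarith⟩).1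
      have h2 : (wb - r - wb)^2 = r^2 := by ring
      rw [h2] at this
      exact this
    rcases eq_or_lt_of_le hcon with heq | hlt
    · rw [heq] at hHw1; linarith
    · have := hbelow (wb - r) ⟨hlt, by linarith⟩
      linarith
  have hw1m : w1 E ∈ Set.Icc (wb - r) (wb + r) := ⟨hw1r.le, by linarith⟩
  have hw2m : w2 E ∈ Set.Icc (wb - r) (wb + r) := ⟨by linarith, hw2r.le⟩
  have hq1 : c1*(w1 E - wb)^2 ≤ E - H wb ∧ E - H wb ≤ c2*(w1 E - wb)^2 := by
    have := hQ (w1 E) hw1m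
    rw [hHw1] at this
    exact this
  have hq2 : c1*(w2 E - wb)^2 ≤ E - H wb ∧ E - H wb ≤ c2*(w2 E - wb)^2 := by
    have := hQ (w2 E) hw2m
    rw [hHw2] at this
    exact this
  -- the half-width of the inner interval
  obtain ⟨a, hadef⟩ : ∃ x : ℝ, x = Real.sqrt ((E - H wb)/c2) := ⟨_, rfl⟩
  have ha0 : 0 < a := by rw [hadef]; exact Real.sqrt_pos.2 (by positivity)
  have hasq : a^2 = (E - H wb)/c2 := by rw [hadef]; exact Real.sq_sqrt (by positivity)
  have haw2 : a ≤ w2 E - wb := by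
    rw [hadef]
    have h1 : Real.sqrt ((E - H wb)/c2) ≤ Real.sqrt ((w2 E - wb)^2) := Real.sqrt_le_sqrt (by
      rw [div_le_iff₀ hc2, mul_comm]
      exact hq2.2)
    rwa [Real.sqrt_sq (by linarith [hw2gt])] at h1
  have haw1 : a ≤ wb - w1 E := by
    rw [hadef]
    have h1 : Real.sqrt ((E - H wb)/c2) ≤ Real.sqrt ((wb - w1 E)^2) := Real.sqrt_le_sqrt (by
      rw [div_le_iff₀ hc2, mul_comm, show (wb - w1 E)^2 = (w1 E - wb)^2 from by ring]
      exact hq1.2)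
    rwa [Real.sqrt_sq (by linarith [hw1lt])] at h1
  have har : a < r := by linarith [haw2, hw2r]
  -- key envelope bounds
  have hK2 : ∀ y ∈ Set.Icc wb (w2 E), c1*(w2 E - wb)^2 - c1*(y - wb)^2 ≤ E - H y := by
    intro y hy
    have hym : y ∈ Set.Icc (wb - r) (wb + r) := ⟨by linarith [hy.1], by linarith [hy.2, hw2r.le]⟩
    have hint := hFTC y (w2 E) hym hw2m
    have hlow : ∫ s in y..(w2 E), 2*c1*(s - wb) ≤ ∫ s in y..(w2 E), deriv H s := by
      refine intervalIntegral.integral_mono_on hy.2 (hpint c1 y (w2 E))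
        (hgint y (w2 E) hym hw2m) ?_
      intro s hs
      obtain ⟨d, hd, heq⟩ := hMVT s ⟨by linarith [hs.1, hy.1], by linarith [hs.2, hw2r.le]⟩
      rw [heq]
      exact mul_le_mul_of_nonneg_right hd.1 (by linarith [hs.1, hy.1])
    rw [hint, hHw2, hpoly] at hlow
    linarith
  have hK1 : ∀ y ∈ Set.Icc (w1 E) wb, c1*(w1 E - wb)^2 - c1*(y - wb)^2 ≤ E - H y := by
    intro y hy
    have hym : y ∈ Set.Icc (wb - r) (wb + r) := ⟨by linarith [hy.1, hw1r.le], by linarith [hy.2]⟩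
    have hint := hFTC (w1 E) y hw1m hym
    have hhigh : ∫ s in (w1 E)..y, deriv H s ≤ ∫ s in (w1 E)..y, 2*c1*(s - wb) := by
      refine intervalIntegral.integral_mono_on hy.1 (hgint (w1 E) y hw1m hym)
        (hpint c1 (w1 E) y) ?_
      intro s hs
      obtain ⟨d, hd, heq⟩ := hMVT s ⟨by linarith [hs.1, hw1r.le], by linarith [hs.2, hy.2]⟩
      rw [heq]
      exact mul_le_mul_of_nonpos_right hd.1 (by linarith [hs.2, hy.2])
    rw [hint, hHw1, hpoly] at hhigh
    linarith
  -- continuity of the integrand away from the zeros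
  have hfc : ∀ s : Set ℝ, s ⊆ Set.Ioo (w1 E) (w2 E) → s ⊆ Set.Ioi 0 →
      ContinuousOn (fun y => (Real.sqrt (2 * (E - H y)))⁻¹) s := by
    intro s hs1 hs2
    refine ContinuousOn.inv₀
      (Real.continuous_sqrt.comp_continuousOn
        (continuousOn_const.mul (continuousOn_const.sub (hHcont.mono hs2)))) ?_
    intro x hx
    exact ne_of_gt (Real.sqrt_pos.2 (by have := hbelow x (hs1 hx); linarith))
  -- integrability on the right half
  have he2 : 0 < c1*(w2 E - wb)^2 := mul_pos hc1 (pow_pos (by linarith) 2)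
  have hG2int := aux_int (wb := wb) (p := wb) (q := w2 E) hc1 he2
    (by rw [show c1*(wb - wb)^2 = 0 from by ring]; exact he2.le) le_rfl
  have hle2 : ∀ y ∈ Set.Icc wb (w2 E), (Real.sqrt (2 * (E - H y)))⁻¹
      ≤ (Real.sqrt (2*(c1*(w2 E - wb)^2 - c1*(y - wb)^2)))⁻¹ := by
    intro y hy
    rcases eq_or_lt_of_le hy.2 with heq | hlt
    · rw [heq, hHw2]
      simp
    · have h1 : (y - wb)^2 < (w2 E - wb)^2 :=
        pow_lt_pow_left₀ (by linarith) (by linarith [hy.1]) two_ne_zero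
      have hinner : 0 < c1*(w2 E - wb)^2 - c1*(y - wb)^2 := by
        have := mul_lt_mul_of_pos_left h1 hc1
        linarith
      exact inv_sqrt_mono (by linarith) (by have := hK2 y hy; linarith)
  have hmeas2 : AEStronglyMeasurable (fun y => (Real.sqrt (2 * (E - H y)))⁻¹)
      (volume.restrict (Set.uIoc wb (w2 E))) := by
    rw [Set.uIoc_of_le (by linarith : wb ≤ w2 E),
      ← MeasureTheory.Measure.restrict_congr_set MeasureTheory.Ioo_ae_eq_Ioc]
    exact (hfc (Set.Ioo wb (w2 E)) (fun x hx => ⟨by linarith [hx.1], hx.2⟩)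
      (fun x hx => Set.mem_Ioi.2 (lt_trans hwb hx.1))).aestronglyMeasurable
      measurableSet_Ioo
  have hfint2 : IntervalIntegrable (fun y => (Real.sqrt (2 * (E - H y)))⁻¹)
      volume wb (w2 E) := by
    refine hG2int.mono_fun hmeas2 ?_
    refine (ae_restrict_iff' measurableSet_uIoc).2 (Filter.Eventually.of_forall fun y hy => ?_)
    rw [Set.uIoc_of_le (by linarith : wb ≤ w2 E)] at hy
    show ‖(Real.sqrt (2 * (E - H y)))⁻¹‖ ≤ ‖(Real.sqrt (2*(c1*(w2 E - wb)^2 - c1*(y - wb)^2)))⁻¹‖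
    rw [Real.norm_eq_abs, Real.norm_eq_abs, abs_of_nonneg (by positivity),
      abs_of_nonneg (by positivity)]
    exact hle2 y ⟨hy.1.le, hy.2⟩
  -- integrability on the left half
  have he1 : 0 < c1*(w1 E - wb)^2 := mul_pos hc1 (by nlinarith [hw1lt])
  have hG1int := aux_int (wb := wb) (p := w1 E) (q := wb) hc1 he1
    le_rfl (by rw [show c1*(wb - wb)^2 = 0 from by ring]; exact he1.le)
  have hle1 : ∀ y ∈ Set.Icc (w1 E) wb, (Real.sqrt (2 * (E - H y)))⁻¹
      ≤ (Real.sqrt (2*(c1*(w1 E - wb)^2 - c1*(y - wb)^2)))⁻¹ := by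
    intro y hy
    rcases eq_or_lt_of_le hy.1 with heq | hlt
    · rw [← heq, hHw1]
      simp
    · have h1 : (y - wb)^2 < (w1 E - wb)^2 := by
        have h2 : (wb - y)^2 < (wb - w1 E)^2 :=
          pow_lt_pow_left₀ (by linarith) (by linarith [hy.2]) two_ne_zero
        calc (y - wb)^2 = (wb - y)^2 := by ring
          _ < (wb - w1 E)^2 := h2
          _ = (w1 E - wb)^2 := by ring
      have hinner : 0 < c1*(w1 E - wb)^2 - c1*(y - wb)^2 := by
        have := mul_lt_mul_of_pos_left h1 hc1
        linarith
      exact inv_sqrt_mono (by linarith) (by have := hK1 y hy; linarith)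
  have hmeas1 : AEStronglyMeasurable (fun y => (Real.sqrt (2 * (E - H y)))⁻¹)
      (volume.restrict (Set.uIoc (w1 E) wb)) := by
    rw [Set.uIoc_of_le (by linarith : w1 E ≤ wb)]
    exact (hfc (Set.Ioc (w1 E) wb) (fun x hx => ⟨hx.1, by linarith [hx.2]⟩)
      (fun x hx => Set.mem_Ioi.2 (by have := hx.1; linarith [hw1pos]))).aestronglyMeasurable
      measurableSet_Ioc
  have hfint1 : IntervalIntegrable (fun y => (Real.sqrt (2 * (E - H y)))⁻¹)
      volume (w1 E) wb := by
    refine hG1int.mono_fun hmeas1 ?_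
    refine (ae_restrict_iff' measurableSet_uIoc).2 (Filter.Eventually.of_forall fun y hy => ?_)
    rw [Set.uIoc_of_le (by linarith : w1 E ≤ wb)] at hy
    show ‖(Real.sqrt (2 * (E - H y)))⁻¹‖ ≤ ‖(Real.sqrt (2*(c1*(w1 E - wb)^2 - c1*(y - wb)^2)))⁻¹‖
    rw [Real.norm_eq_abs, Real.norm_eq_abs, abs_of_nonneg (by positivity),
      abs_of_nonneg (by positivity)]
    exact hle1 y ⟨hy.1.le, hy.2⟩
  have hfint : IntervalIntegrable (fun y => (Real.sqrt (2 * (E - H y)))⁻¹)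
      volume (w1 E) (w2 E) := hfint1.trans hfint2
  -- values of the envelope integrals
  have hsqrt2c1 : Real.sqrt (2*c1) = Real.sqrt (A - η) := by
    rw [hc1def]; congr 1; ring
  have hG2val : ∫ y in wb..(w2 E), (Real.sqrt (2*(c1*(w2 E - wb)^2 - c1*(y - wb)^2)))⁻¹
      = (Real.sqrt (2*c1))⁻¹ * (Real.pi/2) := by
    have h := aux_val (wb := wb) (p := wb) (q := w2 E) hc1 he2 (by linarith)
      (by rw [show c1*(wb - wb)^2 = 0 from by ring]; exact he2.le) le_rfl
    have harg : Real.sqrt (c1/(c1*(w2 E - wb)^2)) * (w2 E - wb) = 1 := by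
      have h0 : c1/(c1*(w2 E - wb)^2) = ((w2 E - wb)^2)⁻¹ := by
        rw [div_mul_eq_div_div, div_self hc1.ne', one_div]
      rw [h0, Real.sqrt_inv, Real.sqrt_sq (by linarith)]
      exact inv_mul_cancel₀ (by linarith)
    rw [h, harg, sub_self, mul_zero, Real.arcsin_one, Real.arcsin_zero, sub_zero]
  have hG1val : ∫ y in (w1 E)..wb, (Real.sqrt (2*(c1*(w1 E - wb)^2 - c1*(y - wb)^2)))⁻¹
      = (Real.sqrt (2*c1))⁻¹ * (Real.pi/2) := by
    have h := aux_val (wb := wb) (p := w1 E) (q := wb) hc1 he1 (by linarith)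
      le_rfl (by rw [show c1*(wb - wb)^2 = 0 from by ring]; exact he1.le)
    have harg : Real.sqrt (c1/(c1*(w1 E - wb)^2)) * (w1 E - wb) = -1 := by
      have h0 : c1/(c1*(w1 E - wb)^2) = ((wb - w1 E)^2)⁻¹ := by
        rw [div_mul_eq_div_div, div_self hc1.ne', one_div,
          show (w1 E - wb)^2 = (wb - w1 E)^2 from by ring]
      rw [h0, Real.sqrt_inv, Real.sqrt_sq (by linarith),
        show w1 E - wb = -(wb - w1 E) from by ring, mul_neg]
      rw [inv_mul_cancel₀ (by linarith : wb - w1 E ≠ 0)]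
    rw [h, harg, sub_self, mul_zero, Real.arcsin_zero, Real.arcsin_neg, Real.arcsin_one]
    ring
  -- upper bound
  have hUB : (∫ y in (w1 E)..(w2 E), (Real.sqrt (2 * (E - H y)))⁻¹)
      ≤ Real.pi / Real.sqrt (A - η) := by
    rw [← intervalIntegral.integral_add_adjacent_intervals hfint1 hfint2]
    have hub1 : (∫ y in (w1 E)..wb, (Real.sqrt (2 * (E - H y)))⁻¹)
        ≤ (Real.sqrt (2*c1))⁻¹ * (Real.pi/2) := by
      rw [← hG1val]
      exact intervalIntegral.integral_mono_on (by linarith) hfint1 hG1int hle1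
    have hub2 : (∫ y in wb..(w2 E), (Real.sqrt (2 * (E - H y)))⁻¹)
        ≤ (Real.sqrt (2*c1))⁻¹ * (Real.pi/2) := by
      rw [← hG2val]
      exact intervalIntegral.integral_mono_on (by linarith) hfint2 hG2int hle2
    have hsA : 0 < Real.sqrt (A - η) := Real.sqrt_pos.2 (by linarith)
    calc _ ≤ (Real.sqrt (2*c1))⁻¹ * (Real.pi/2) + (Real.sqrt (2*c1))⁻¹ * (Real.pi/2) :=
          add_le_add hub1 hub2
      _ = Real.pi / Real.sqrt (A - η) := by
          rw [hsqrt2c1]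
          field_simp
          ring
  -- lower bound
  have hG3int := aux_int (wb := wb) (p := wb - a) (q := wb + a) hc1 hE'pos
    (by rw [show (wb - a - wb)^2 = a^2 from by ring, hasq]
        calc c1 * ((E - H wb)/c2) = (c1/c2) * (E - H wb) := by ring
          _ ≤ 1 * (E - H wb) := by
              apply mul_le_mul_of_nonneg_right _ hE'pos.le
              exact (div_le_one hc2).2 hc12.le
          _ = E - H wb := one_mul _)
    (by rw [show (wb + a - wb)^2 = a^2 from by ring, hasq]
        calc c1 * ((E - H wb)/c2) = (c1/c2) * (E - H wb) := by ring
          _ ≤ 1 * (E - H wb) := by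
              apply mul_le_mul_of_nonneg_right _ hE'pos.le
              exact (div_le_one hc2).2 hc12.le
          _ = E - H wb := one_mul _)
  have hfpq : IntervalIntegrable (fun y => (Real.sqrt (2 * (E - H y)))⁻¹)
      volume (wb - a) (wb + a) := by
    refine hfint.mono_set ?_
    rw [Set.uIcc_of_le (by linarith), Set.uIcc_of_le (by linarith [haw1, haw2])]
    exact Set.Icc_subset_Icc (by linarith [haw1]) (by linarith [haw2])
  have hae : (fun y => (Real.sqrt (2*((E - H wb) - c1*(y - wb)^2)))⁻¹)
      ≤ᵐ[volume.restrict (Set.Icc (wb - a) (wb + a))]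
      (fun y => (Real.sqrt (2 * (E - H y)))⁻¹) := by
    have hnull : volume ({wb - a, wb + a} : Set ℝ) = 0 := by
      rw [Set.insert_eq]
      exact measure_union_null (measure_singleton _) (measure_singleton _)
    rw [Filter.EventuallyLE, ae_restrict_iff' measurableSet_Icc]
    filter_upwards [measure_eq_zero_iff_ae_notMem.mp hnull] with y hy hyIcc
    simp only [Set.mem_insert_iff, Set.mem_singleton_iff, not_or] at hy
    have hy1 : wb - a < y := lt_of_le_of_ne hyIcc.1 (Ne.symm hy.1)
    have hy2 : y < wb + a := lt_of_le_of_ne hyIcc.2 hy.2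
    have hyr : y ∈ Set.Icc (wb - r) (wb + r) := ⟨by linarith, by linarith⟩
    have hQy := hQ y hyr
    have h1 : (y - wb)^2 < a^2 := sq_lt_sq' (by linarith) (by linarith)
    have hlt : c2*(y - wb)^2 < E - H wb := by
      have h2 := mul_lt_mul_of_pos_left h1 hc2
      have h3 : c2 * a^2 = E - H wb := by
        rw [hasq]
        field_simp
      linarith
    have hpos : 0 < E - H y := by linarith [hQy.2]
    exact inv_sqrt_mono (by linarith) (by linarith [hQy.1])
  have hmid := intervalIntegral.integral_mono_ae_restrict
    (by linarith : wb - a ≤ wb + a) hG3int hfpq hae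
  have hG3val : ∫ y in (wb - a)..(wb + a),
      (Real.sqrt (2*((E - H wb) - c1*(y - wb)^2)))⁻¹
      = (Real.sqrt (2*c1))⁻¹ * (2 * Real.arcsin (Real.sqrt (c1/c2))) := by
    have h := aux_val (wb := wb) (p := wb - a) (q := wb + a) hc1 hE'pos (by linarith)
      (by rw [show (wb - a - wb)^2 = a^2 from by ring, hasq]
          calc c1 * ((E - H wb)/c2) = (c1/c2) * (E - H wb) := by ring
            _ ≤ 1 * (E - H wb) := by
                apply mul_le_mul_of_nonneg_right _ hE'pos.le
                exact (div_le_one hc2).2 hc12.le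
            _ = E - H wb := one_mul _)
      (by rw [show (wb + a - wb)^2 = a^2 from by ring, hasq]
          calc c1 * ((E - H wb)/c2) = (c1/c2) * (E - H wb) := by ring
            _ ≤ 1 * (E - H wb) := by
                apply mul_le_mul_of_nonneg_right _ hE'pos.le
                exact (div_le_one hc2).2 hc12.le
            _ = E - H wb := one_mul _)
    have hκ : Real.sqrt (c1/(E - H wb)) * a = Real.sqrt (c1/c2) := by
      rw [hadef, ← Real.sqrt_mul (by positivity)]
      congr 1
      field_simp
    rw [h, show wb + a - wb = a from by ring, show wb - a - wb = -a from by ring,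
      mul_neg, hκ, Real.arcsin_neg]
    ring
  have hLB : 2 / Real.sqrt (A - η) * Real.arcsin (Real.sqrt ((A - η)/(A + η)))
      ≤ ∫ y in (w1 E)..(w2 E), (Real.sqrt (2 * (E - H y)))⁻¹ := by
    have hfa : IntervalIntegrable (fun y => (Real.sqrt (2 * (E - H y)))⁻¹)
        volume (w1 E) (wb - a) := by
      refine hfint.mono_set ?_
      rw [Set.uIcc_of_le (by linarith [haw1]), Set.uIcc_of_le (by linarith)]
      exact Set.Icc_subset_Icc le_rfl (by linarith [haw2])
    have hfb : IntervalIntegrable (fun y => (Real.sqrt (2 * (E - H y)))⁻¹)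
        volume (wb - a) (w2 E) := by
      refine hfint.mono_set ?_
      rw [Set.uIcc_of_le (by linarith [haw1, haw2]), Set.uIcc_of_le (by linarith)]
      exact Set.Icc_subset_Icc (by linarith [haw1]) le_rfl
    have hfcq : IntervalIntegrable (fun y => (Real.sqrt (2 * (E - H y)))⁻¹)
        volume (wb + a) (w2 E) := by
      refine hfint.mono_set ?_
      rw [Set.uIcc_of_le (by linarith [haw2]), Set.uIcc_of_le (by linarith)]
      exact Set.Icc_subset_Icc (by linarith [haw1]) le_rfl
    have hs1 := intervalIntegral.integral_add_adjacent_intervals hfa hfb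
    have hs2 := intervalIntegral.integral_add_adjacent_intervals hfpq hfcq
    have hnn1 : 0 ≤ ∫ y in (w1 E)..(wb - a), (Real.sqrt (2 * (E - H y)))⁻¹ :=
      intervalIntegral.integral_nonneg (by linarith [haw1]) (fun u _ => by positivity)
    have hnn2 : 0 ≤ ∫ y in (wb + a)..(w2 E), (Real.sqrt (2 * (E - H y)))⁻¹ :=
      intervalIntegral.integral_nonneg (by linarith [haw2]) (fun u _ => by positivity)
    have hc1c2 : c1/c2 = (A - η)/(A + η) := by
      have hAη : A + η ≠ 0 := by linarith
      rw [hc1def, hc2def]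
      field_simp
    have hval2 : (Real.sqrt (2*c1))⁻¹ * (2 * Real.arcsin (Real.sqrt (c1/c2)))
        = 2 / Real.sqrt (A - η) * Real.arcsin (Real.sqrt ((A - η)/(A + η))) := by
      rw [hsqrt2c1, hc1c2]
      ring
    rw [hG3val, hval2] at hmid
    linarith [hmid, hnn1, hnn2, hs1, hs2]
  -- conclusion
  rw [Real.dist_eq]
  rw [abs_lt] at hUη hLη ⊢
  constructor
  · linarith [hLη.1, hLB]
  · linarith [hUη.2, hUB]
end

section
/- Let a > d_c > 0, d_b, d, K_w, M > 0 with M K_w (1 + d_c/a)² ≤ (d_b + d)(d_c/a)². Suppose u, v : [0,∞) → [0,∞) are C¹ and w : [0,∞) → [0, K_w] satisfy u' ≤ a v − d_c u, v' = −(d_b+d) v + u² w, with u(0) ≤ M and v(0) < (d_c/a)² M. Then u(t) < M(1 + d_c/a) and v(t) < (d_c/a)² M for all t > 0. -/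
open Set Real Filter

lemma gron_aux (k c T : ℝ) (hk : 0 < k) (hT : 0 ≤ T) (f : ℝ → ℝ)
    (hdiff : ∀ t ∈ Set.Icc (0:ℝ) T, DifferentiableAt ℝ f t)
    (hineq : ∀ t ∈ Set.Icc (0:ℝ) T, deriv f t ≤ -k * f t + c) :
    f T ≤ c / k + (f 0 - c / k) * Real.exp (-(k * T)) := by
  set g : ℝ → ℝ := fun t => (f t - c / k) * Real.exp (k * t) with hg
  have hgd : ∀ t ∈ Set.Icc (0:ℝ) T,
      HasDerivAt g ((deriv f t + k * (f t - c / k)) * Real.exp (k * t)) t := by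
    intro t ht
    have h1 : HasDerivAt f (deriv f t) t := (hdiff t ht).hasDerivAt
    have h2 : HasDerivAt (fun s => f s - c / k) (deriv f t) t := h1.sub_const _
    have h3 : HasDerivAt (fun s : ℝ => Real.exp (k * s)) (Real.exp (k * t) * k) t := by
      have := (Real.hasDerivAt_exp (k * t)).comp t ((hasDerivAt_id t).const_mul k)
      simpa [mul_comm, Function.comp_def] using this
    have := h2.mul h3
    exact this.congr_deriv (by ring)
  have hanti : AntitoneOn g (Set.Icc 0 T) := by
    apply antitoneOn_of_deriv_nonpos (convex_Icc 0 T)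
    · exact fun t ht => ((hgd t ht).continuousAt).continuousWithinAt
    · intro t ht
      rw [interior_Icc] at ht
      exact ((hgd t (Set.Ioo_subset_Icc_self ht)).differentiableAt).differentiableWithinAt
    · intro t ht
      rw [interior_Icc] at ht
      have ht' := Set.Ioo_subset_Icc_self ht
      rw [(hgd t ht').deriv]
      have h4 : deriv f t + k * (f t - c / k) ≤ 0 := by
        have hkc : k * (c / k) = c := by field_simp
        have := hineq t ht'
        nlinarith
      exact mul_nonpos_of_nonpos_of_nonneg h4 (Real.exp_pos _).le
  have hgT := hanti (Set.left_mem_Icc.mpr hT) (Set.right_mem_Icc.mpr hT) hT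
  simp only [hg, mul_zero, Real.exp_zero, mul_one] at hgT
  have hEpos : (0:ℝ) < Real.exp (k * T) := Real.exp_pos _
  have h5 := mul_le_mul_of_nonneg_right hgT (inv_nonneg.mpr hEpos.le)
  rw [mul_assoc, mul_inv_cancel₀ hEpos.ne', mul_one] at h5
  rw [Real.exp_neg]
  linarith


set_option maxHeartbeats 1000000


/-- Invariance estimate (Lemma 4.3): under the parameter condition
`M K_w (1 + d_c/a)² ≤ (d_b+d)(d_c/a)²`, solutions starting with `u(0) ≤ M`,
`v(0) < (d_c/a)² M` satisfy `u(t) < M(1 + d_c/a)` and `v(t) < (d_c/a)² M` for `t > 0`. -/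
theorem stmt12 (a d_c d_b d K_w M : ℝ)
    (ha : d_c < a) (hdc : 0 < d_c) (hdb : 0 < d_b) (hd : 0 < d)
    (hKw : 0 < K_w) (hM : 0 < M)
    (hpar : M * K_w * (1 + d_c / a) ^ 2 ≤ (d_b + d) * (d_c / a) ^ 2)
    (u v w : ℝ → ℝ)
    (hu0 : ∀ t, 0 ≤ t → 0 ≤ u t) (hv0 : ∀ t, 0 ≤ t → 0 ≤ v t)
    (hw : ∀ t, 0 ≤ t → 0 ≤ w t ∧ w t ≤ K_w)
    (hud : ∀ t, 0 ≤ t → DifferentiableAt ℝ u t)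
    (hvd : ∀ t, 0 ≤ t → DifferentiableAt ℝ v t)
    (hu' : ∀ t, 0 ≤ t → deriv u t ≤ a * v t - d_c * u t)
    (hv' : ∀ t, 0 ≤ t → deriv v t = -(d_b + d) * v t + (u t) ^ 2 * w t)
    (hui : u 0 ≤ M) (hvi : v 0 < (d_c / a) ^ 2 * M) :
    ∀ t, 0 < t → u t < M * (1 + d_c / a) ∧ v t < (d_c / a) ^ 2 * M := by
  have ha0 : (0:ℝ) < a := hdc.trans ha
  set ε : ℝ := d_c / a with hε
  clear_value ε
  have hε0 : 0 < ε := by rw [hε]; exact div_pos hdc ha0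
  have hε1 : ε < 1 := by rw [hε]; exact (div_lt_one ha0).mpr ha
  have haε : a * ε = d_c := by rw [hε]; field_simp
  set B : ℝ := ε ^ 2 * M with hB
  clear_value B
  have hB0 : 0 < B := by rw [hB]; positivity
  set lam : ℝ := d_b + d with hlam
  clear_value lam
  have hlam0 : 0 < lam := by rw [hlam]; positivity
  -- a * B / d_c = ε * M
  have hqu : a * B / d_c = ε * M := by
    rw [hB, ← haε]; field_simp
  have hεM : ε * M ≤ M := by nlinarith
  -- key u-bound lemma: if v ≤ B on [0,T], then u ≤ M on [0,T]
  have uBound : ∀ T, 0 ≤ T → (∀ s ∈ Set.Icc (0:ℝ) T, v s ≤ B) → u T ≤ M := by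
    intro T hT hvle
    have h := gron_aux d_c (a * B) T hdc hT u
      (fun t ht => hud t ht.1)
      (by
        intro t ht
        have h1 := hu' t ht.1
        have h2 := mul_le_mul_of_nonneg_left (hvle t ht) ha0.le
        linarith)
    rw [hqu] at h
    have hE : 0 < Real.exp (-(d_c * T)) := Real.exp_pos _
    have hE1 : Real.exp (-(d_c * T)) ≤ 1 := by
      rw [Real.exp_le_one_iff]; nlinarith
    nlinarith [mul_nonneg (sub_nonneg.mpr hui) hE.le,
      mul_nonneg (sub_nonneg.mpr hεM) (sub_nonneg.mpr hE1)]
  -- Step A: v t < B for all t ≥ 0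
  have hvB : ∀ t, 0 ≤ t → v t < B := by
    by_contra hcon
    push_neg at hcon
    obtain ⟨t₀, ht₀, hvt₀⟩ := hcon
    set S : Set ℝ := {t | 0 ≤ t ∧ B ≤ v t} with hS
    have hne : S.Nonempty := ⟨t₀, ht₀, hvt₀⟩
    have hbdd : BddBelow S := ⟨0, fun s hs => hs.1⟩
    set t₁ : ℝ := sInf S with ht₁
    clear_value t₁
    have h1nn : 0 ≤ t₁ := by rw [ht₁]; exact le_csInf hne (fun s hs => hs.1)
    have hlt : ∀ s, 0 ≤ s → s < t₁ → v s < B := by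
      intro s hs hst
      by_contra hge
      have h6 : t₁ ≤ s := by rw [ht₁]; exact csInf_le hbdd ⟨hs, not_lt.mp hge⟩
      exact absurd h6 (not_le.mpr hst)
    have hco : ContinuousAt v t₁ := (hvd t₁ h1nn).continuousAt
    have hvt₁ge : B ≤ v t₁ := by
      by_contra hnot
      have hmem : v ⁻¹' Set.Iio B ∈ nhds t₁ :=
        hco.preimage_mem_nhds (Iio_mem_nhds (lt_of_not_ge hnot))
      obtain ⟨δ, hδ, hball⟩ := Metric.mem_nhds_iff.mp hmem
      obtain ⟨s, hsS, hs⟩ := exists_lt_of_csInf_lt hne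
        (show sInf S < t₁ + δ by rw [← ht₁]; linarith)
      have hts : t₁ ≤ s := by rw [ht₁]; exact csInf_le hbdd hsS
      have : s ∈ Metric.ball t₁ δ := by
        rw [Metric.mem_ball, Real.dist_eq, abs_lt]
        constructor <;> linarith
      exact absurd hsS.2 (not_le.mpr (hball this))
    have ht₁pos : 0 < t₁ := by
      rcases h1nn.lt_or_eq with h | h
      · exact h
      · exfalso; rw [← h] at hvt₁ge; exact absurd hvi (not_lt.mpr hvt₁ge)
    have hvt₁le : v t₁ ≤ B := by
      have htend : Filter.Tendsto v (nhdsWithin t₁ (Set.Iio t₁)) (nhds (v t₁)) :=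
        hco.continuousWithinAt
      refine le_of_tendsto htend ?_
      filter_upwards [Ioo_mem_nhdsLT_of_mem (Set.mem_Ioc.mpr ⟨ht₁pos, le_refl t₁⟩)] with s hs
      exact (hlt s hs.1.le hs.2).le
    have hvle : ∀ s ∈ Set.Icc (0:ℝ) t₁, v s ≤ B := by
      intro s hs
      rcases hs.2.lt_or_eq with h | h
      · exact (hlt s hs.1 h).le
      · rw [h]; exact hvt₁le
    have huM : ∀ s ∈ Set.Icc (0:ℝ) t₁, u s ≤ M := by
      intro s hs
      exact uBound s hs.1 (fun r hr => hvle r ⟨hr.1, hr.2.trans hs.2⟩)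
    -- Grönwall for v on [0, t₁]
    have hgv := gron_aux lam (M ^ 2 * K_w) t₁ hlam0 h1nn v
      (fun t ht => hvd t ht.1)
      (by
        intro t ht
        rw [hv' t ht.1]
        have h1 := huM t ht
        have h2 := hw t ht.1
        have h3 := hu0 t ht.1
        have h4 : u t ^ 2 * w t ≤ M ^ 2 * K_w := by
          have hsq : u t ^ 2 ≤ M ^ 2 := by nlinarith
          exact mul_le_mul hsq h2.2 h2.1 (by positivity)
        linarith)
    set q : ℝ := M ^ 2 * K_w / lam with hqdef
    set E : ℝ := Real.exp (-(lam * t₁)) with hEdef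
    have hE0 : 0 < E := Real.exp_pos _
    have hE1 : E ≤ 1 := by rw [hEdef, Real.exp_le_one_iff]; nlinarith
    clear_value E
    have hq : q < B := by
      have hMK : M * K_w < lam * ε ^ 2 := by nlinarith [mul_pos hM hKw]
      have h5 : M * (M * K_w) < M * (lam * ε ^ 2) := (mul_lt_mul_iff_right₀ hM).mpr hMK
      rw [hqdef, div_lt_iff₀ hlam0, hB]
      nlinarith
    clear_value q
    have hfin : v t₁ < B := by
      nlinarith [mul_nonneg (sub_nonneg.mpr hq.le) (sub_nonneg.mpr hE1),
        mul_pos hE0 (sub_pos.mpr hvi)]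
    exact absurd hvt₁ge (not_le.mpr hfin)
  -- Step B: conclude
  intro t ht
  have huM : u t ≤ M := uBound t ht.le (fun s hs => (hvB s hs.1).le)
  refine ⟨?_, hvB t ht.le⟩
  nlinarith
end

section
/- Let a > d_c > 0, d_b, d, K_w, M > 0 satisfy M K_w (1 + d_c/a)² ≤ (d_b + d)(d_c/a)². Suppose u, v : [0,∞) → [0,∞) are C¹, w : [0,∞) → [0, K_w], u' ≤ a v − d_c u, u' = ((a v)/(u+v) − d_c) u, v' = −(d_b+d)v + u² w, u(0) ≤ M, v(0) < (d_c/a)² M. Then u(t) → 0 and v(t) → 0 as t → ∞. -/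
open Filter Topology Set

/-- If the derivative is negative at a point, the function is eventually smaller
just to the right. -/
lemma aux_evtl_lt_stmt13 {f : ℝ → ℝ} {s : ℝ} (hf : DifferentiableAt ℝ f s)
    (h : deriv f s < 0) : ∀ᶠ t in 𝓝[>] s, f t < f s := by
  have h1 : Tendsto (slope f s) (𝓝[≠] s) (𝓝 (deriv f s)) :=
    hasDerivAt_iff_tendsto_slope.mp hf.hasDerivAt
  have h2 : ∀ᶠ t in 𝓝[≠] s, slope f s t < 0 := h1.eventually_lt_const h
  have h3 : ∀ᶠ t in 𝓝[>] s, slope f s t < 0 :=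
    h2.filter_mono (nhdsWithin_mono _ fun x hx => ne_of_gt hx)
  filter_upwards [h3, self_mem_nhdsWithin] with t ht hts
  have hts' : s < t := hts
  rw [slope_def_field] at ht
  have hpos : 0 < t - s := sub_pos.mpr hts'
  rcases div_neg_iff.mp ht with ⟨_, h⟩ | ⟨h, _⟩ <;> linarith

set_option maxHeartbeats 1000000 in
/-- Pointwise extinction: under the parameter condition and initial bounds,
`u(t) → 0` and `v(t) → 0` as `t → ∞`. -/
theorem stmt13 (a d_c d_b d K_w M : ℝ)
    (ha : d_c < a) (hdc : 0 < d_c) (hdb : 0 < d_b) (hd : 0 < d)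
    (hKw : 0 < K_w) (hM : 0 < M)
    (hpar : M * K_w * (1 + d_c / a) ^ 2 ≤ (d_b + d) * (d_c / a) ^ 2)
    (u v w : ℝ → ℝ)
    (hu0 : ∀ t, 0 ≤ t → 0 ≤ u t) (hv0 : ∀ t, 0 ≤ t → 0 ≤ v t)
    (hw : ∀ t, 0 ≤ t → 0 ≤ w t ∧ w t ≤ K_w)
    (hud : ∀ t, 0 ≤ t → DifferentiableAt ℝ u t)
    (hvd : ∀ t, 0 ≤ t → DifferentiableAt ℝ v t)
    (hu'le : ∀ t, 0 ≤ t → deriv u t ≤ a * v t - d_c * u t)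
    (hu' : ∀ t, 0 ≤ t → deriv u t = (a * v t / (u t + v t) - d_c) * u t)
    (hv' : ∀ t, 0 ≤ t → deriv v t = -(d_b + d) * v t + (u t) ^ 2 * w t)
    (hui : u 0 ≤ M) (hvi : v 0 < (d_c / a) ^ 2 * M) :
    Filter.Tendsto u Filter.atTop (nhds 0) ∧
    Filter.Tendsto v Filter.atTop (nhds 0) := by
  have ha0 : 0 < a := hdc.trans ha
  set r : ℝ := d_c / a with hrdef
  have hr0 : 0 < r := div_pos hdc ha0
  have hr1 : r < 1 := (div_lt_one ha0).mpr ha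
  have har : a * r = d_c := by rw [hrdef]; field_simp
  have hp2 : (0:ℝ) < (1 + r) ^ 2 := by positivity
  -- derivative negativity on the boundary of the invariant region
  have duneg : ∀ s, 0 ≤ s → u s = M → v s ≤ r ^ 2 * M → deriv u s < 0 := by
    intro s hs hus hvs
    have h1 := hu'le s hs
    rw [hus] at h1
    have h2 : a * v s ≤ a * (r ^ 2 * M) := mul_le_mul_of_nonneg_left hvs ha0.le
    have h3 : a * (r ^ 2 * M) = d_c * r * M := by rw [← har]; ring
    have h4 : d_c * r * M < d_c * M := by nlinarith [mul_pos hdc hM]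
    linarith
  have dvneg : ∀ s, 0 ≤ s → u s ≤ M → v s = r ^ 2 * M → deriv v s < 0 := by
    intro s hs hus hvs
    have h1 := hv' s hs
    obtain ⟨hw0, hwK⟩ := hw s hs
    have hus0 := hu0 s hs
    have hsq : (u s) ^ 2 ≤ M ^ 2 := by nlinarith
    have husq : (u s) ^ 2 * w s ≤ M ^ 2 * K_w := by
      calc (u s) ^ 2 * w s ≤ (u s) ^ 2 * K_w :=
            mul_le_mul_of_nonneg_left hwK (by positivity)
        _ ≤ M ^ 2 * K_w := mul_le_mul_of_nonneg_right hsq hKw.le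
    have hMK : M ^ 2 * K_w * (1 + r) ^ 2 ≤ (d_b + d) * r ^ 2 * M := by
      nlinarith [mul_le_mul_of_nonneg_right hpar hM.le]
    have hpos : 0 < M ^ 2 * K_w := by positivity
    have hlt2 : M ^ 2 * K_w < (d_b + d) * r ^ 2 * M := by
      nlinarith [mul_pos hpos (show (0:ℝ) < 2 * r + r ^ 2 by positivity)]
    rw [hvs] at h1
    linarith
  -- Step 1: invariance of the region { u ≤ M, v ≤ r² M }
  have inv : ∀ t, 0 ≤ t → u t ≤ M ∧ v t ≤ r ^ 2 * M := by
    by_contra hcon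
    push_neg at hcon
    obtain ⟨t0, ht0, hP0⟩ := hcon
    set F : Set ℝ := {t | 0 ≤ t ∧ ¬ (u t ≤ M ∧ v t ≤ r ^ 2 * M)} with hF
    have hFne : F.Nonempty := ⟨t0, ht0, fun h => absurd h.2 (not_le.mpr (hP0 h.1))⟩
    have hFbd : BddBelow F := ⟨0, fun t ht => ht.1⟩
    set s := sInf F with hsdef
    have hs0 : 0 ≤ s := le_csInf hFne fun t ht => ht.1
    have hlt : ∀ t, 0 ≤ t → t < s → u t ≤ M ∧ v t ≤ r ^ 2 * M := by
      intro t ht hts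
      by_contra hc
      exact absurd (csInf_le hFbd ⟨ht, hc⟩) (not_le.mpr hts)
    have hPs : u s ≤ M ∧ v s ≤ r ^ 2 * M := by
      rcases eq_or_lt_of_le hs0 with h0 | h0
      · exact h0 ▸ ⟨hui, hvi.le⟩
      · have hev : ∀ᶠ t in 𝓝[<] s, u t ≤ M ∧ v t ≤ r ^ 2 * M := by
          filter_upwards [Ioo_mem_nhdsLT h0] with t ht
          exact hlt t ht.1.le ht.2
        have hne : (𝓝[<] s).NeBot := nhdsLT_neBot s
        constructor
        · exact le_of_tendsto ((hud s hs0).continuousAt.mono_left nhdsWithin_le_nhds)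
            (hev.mono fun t h => h.1)
        · exact le_of_tendsto ((hvd s hs0).continuousAt.mono_left nhdsWithin_le_nhds)
            (hev.mono fun t h => h.2)
    have hu_ev : ∀ᶠ t in 𝓝[>] s, u t ≤ M := by
      rcases lt_or_eq_of_le hPs.1 with h | h
      · have := ((hud s hs0).continuousAt.mono_left nhdsWithin_le_nhds :
          Tendsto u (𝓝[>] s) (𝓝 (u s))).eventually_lt_const h
        exact this.mono fun t ht => ht.le
      · have := aux_evtl_lt_stmt13 (hud s hs0) (duneg s hs0 h hPs.2)
        exact this.mono fun t ht => by rw [h] at ht; exact ht.le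
    have hv_ev : ∀ᶠ t in 𝓝[>] s, v t ≤ r ^ 2 * M := by
      rcases lt_or_eq_of_le hPs.2 with h | h
      · have := ((hvd s hs0).continuousAt.mono_left nhdsWithin_le_nhds :
          Tendsto v (𝓝[>] s) (𝓝 (v s))).eventually_lt_const h
        exact this.mono fun t ht => ht.le
      · have := aux_evtl_lt_stmt13 (hvd s hs0) (dvneg s hs0 hPs.1 h)
        exact this.mono fun t ht => by rw [h] at ht; exact ht.le
    have hP_ev : ∀ᶠ t in 𝓝[Set.Ici s] s, u t ≤ M ∧ v t ≤ r ^ 2 * M := by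
      have hIci : Set.Ici s = insert s (Set.Ioi s) := by
        ext x
        simp [Set.mem_insert_iff, le_iff_lt_or_eq, or_comm, eq_comm]
      rw [hIci, nhdsWithin_insert, eventually_sup, eventually_pure]
      exact ⟨hPs, hu_ev.and hv_ev⟩
    have hmem : s ∈ closure F := csInf_mem_closure hFne hFbd
    have hnb : (𝓝[F] s).NeBot := mem_closure_iff_nhdsWithin_neBot.mp hmem
    have hFsub : F ⊆ Set.Ici s := fun t ht => csInf_le hFbd ht
    have hle : 𝓝[F] s ≤ 𝓝[Set.Ici s] s := nhdsWithin_mono _ hFsub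
    have h1 : ∀ᶠ t in 𝓝[F] s, u t ≤ M ∧ v t ≤ r ^ 2 * M := hP_ev.filter_mono hle
    have h2 : ∀ᶠ t in 𝓝[F] s, t ∈ F := eventually_mem_nhdsWithin
    obtain ⟨t, htP, htF⟩ := (h1.and h2).exists
    exact htF.2 htP
  -- Step 2: exponential decay of the Lyapunov function E = u + λ v
  set lam : ℝ := 2 * a / (d_b + d) with hlamdef
  have hdbd : (0:ℝ) < d_b + d := add_pos hdb hd
  have hlam0 : 0 < lam := by positivity
  have hlamdb : lam * (d_b + d) = 2 * a := by rw [hlamdef]; field_simp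
  set eps : ℝ := min (d_c * (1 + r ^ 2) / (1 + r) ^ 2) ((d_b + d) / 2) with hepsdef
  have heps0 : 0 < eps := lt_min (by positivity) (by positivity)
  have he1 : eps ≤ d_c * (1 + r ^ 2) / (1 + r) ^ 2 := min_le_left _ _
  have he2 : eps ≤ (d_b + d) / 2 := min_le_right _ _
  have hveps : eps * lam ≤ a := by
    rw [hlamdef]
    rw [mul_div_assoc']
    rw [div_le_iff₀ hdbd]
    nlinarith [mul_le_mul_of_nonneg_left he2 (show (0:ℝ) ≤ 2 * a by positivity)]
  have hueps : lam * (M * K_w) + eps ≤ d_c := by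
    have h3 : lam * (M * K_w) * (1 + r) ^ 2 ≤ 2 * a * r ^ 2 := by
      calc lam * (M * K_w) * (1 + r) ^ 2 = lam * (M * K_w * (1 + r) ^ 2) := by ring
        _ ≤ lam * ((d_b + d) * r ^ 2) := mul_le_mul_of_nonneg_left hpar hlam0.le
        _ = 2 * a * r ^ 2 := by rw [← mul_assoc, hlamdb]
    have h4 : eps * (1 + r) ^ 2 ≤ d_c * (1 + r ^ 2) := (le_div_iff₀ hp2).mp he1
    have har2 : 2 * a * r ^ 2 = 2 * d_c * r := by rw [← har]; ring
    rw [har2] at h3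
    have h5 : (lam * (M * K_w) + eps) * (1 + r) ^ 2 ≤ d_c * (1 + r) ^ 2 := by nlinarith
    exact le_of_mul_le_mul_right h5 hp2
  have key : ∀ t, 0 ≤ t → deriv u t + lam * deriv v t ≤ -eps * (u t + lam * v t) := by
    intro t ht
    obtain ⟨huM, hvM⟩ := inv t ht
    have h1 := hu'le t ht
    have h2 := hv' t ht
    have hu0t := hu0 t ht
    have hv0t := hv0 t ht
    obtain ⟨hw0, hwK⟩ := hw t ht
    have hb1 : (u t) ^ 2 * w t ≤ u t * (M * K_w) := by
      have hb0 : u t * w t ≤ M * K_w := mul_le_mul huM hwK hw0 hM.le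
      calc (u t) ^ 2 * w t = u t * (u t * w t) := by ring
        _ ≤ u t * (M * K_w) := mul_le_mul_of_nonneg_left hb0 hu0t
    have step : deriv u t + lam * deriv v t ≤
        a * v t - d_c * u t - (2 * a) * v t + (lam * (M * K_w)) * u t := by
      rw [h2]
      have hb2 : lam * ((u t) ^ 2 * w t) ≤ lam * (u t * (M * K_w)) :=
        mul_le_mul_of_nonneg_left hb1 hlam0.le
      have hb3 : lam * (-(d_b + d) * v t) = -(2 * a) * v t := by
        rw [show lam * (-(d_b + d) * v t) = -(lam * (d_b + d)) * v t by ring, hlamdb]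
      nlinarith [h1, hb2, hb3]
    have hA : (lam * (M * K_w) + eps - d_c) * u t ≤ 0 :=
      mul_nonpos_of_nonpos_of_nonneg (by linarith) hu0t
    have hB : (eps * lam - a) * v t ≤ 0 :=
      mul_nonpos_of_nonpos_of_nonneg (by linarith) hv0t
    nlinarith [step, hA, hB]
  -- monotonicity of g t = E t * exp (eps t)
  set E : ℝ → ℝ := fun t => u t + lam * v t with hE
  set g : ℝ → ℝ := fun t => E t * Real.exp (eps * t) with hg
  have hgdiff : ∀ t : ℝ, 0 ≤ t → HasDerivAt g
      ((deriv u t + lam * deriv v t) * Real.exp (eps * t)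
        + E t * (eps * Real.exp (eps * t))) t := by
    intro t ht
    have h1 : HasDerivAt E (deriv u t + lam * deriv v t) t :=
      (hud t ht).hasDerivAt.add ((hvd t ht).hasDerivAt.const_mul lam)
    have hlin : HasDerivAt (fun s : ℝ => eps * s) eps t := by
      simpa using (hasDerivAt_id t).const_mul eps
    have h2 : HasDerivAt (fun s : ℝ => Real.exp (eps * s)) (eps * Real.exp (eps * t)) t := by
      convert hlin.exp using 1
      ring
    exact h1.mul h2
  have hanti : AntitoneOn g (Set.Ici 0) := by
    apply antitoneOn_of_deriv_nonpos (convex_Ici 0)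
    · intro t ht
      exact ((hgdiff t ht).continuousAt.continuousWithinAt)
    · intro t ht
      rw [interior_Ici] at ht
      exact ((hgdiff t (le_of_lt ht)).differentiableAt.differentiableWithinAt)
    · intro t ht
      rw [interior_Ici] at ht
      have ht' : (0:ℝ) ≤ t := le_of_lt ht
      rw [(hgdiff t ht').deriv]
      have hk := key t ht'
      have hexp : 0 < Real.exp (eps * t) := Real.exp_pos _
      show (deriv u t + lam * deriv v t) * Real.exp (eps * t)
        + (u t + lam * v t) * (eps * Real.exp (eps * t)) ≤ 0
      nlinarith [mul_le_mul_of_nonneg_right hk hexp.le]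
  have hdecay : ∀ t : ℝ, 0 ≤ t → E t ≤ E 0 * Real.exp (-(eps * t)) := by
    intro t ht
    have hmono : g t ≤ g 0 := hanti Set.self_mem_Ici ht ht
    have h0 : g 0 = E 0 := by simp [hg]
    rw [h0] at hmono
    have hgt : g t = E t * Real.exp (eps * t) := rfl
    rw [hgt] at hmono
    have hexp : 0 < Real.exp (eps * t) := Real.exp_pos _
    calc E t = (E t * Real.exp (eps * t)) * Real.exp (-(eps * t)) := by
          rw [mul_assoc, ← Real.exp_add]; simp
      _ ≤ E 0 * Real.exp (-(eps * t)) :=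
          mul_le_mul_of_nonneg_right hmono (Real.exp_pos _).le
  have hElim : ∀ C : ℝ, Tendsto (fun t => C * Real.exp (-(eps * t))) atTop (𝓝 0) := by
    intro C
    have h1 : Tendsto (fun t : ℝ => -(eps * t)) atTop atBot := by
      apply tendsto_neg_atBot_iff.mpr
      exact Tendsto.const_mul_atTop heps0 tendsto_id
    have h2 : Tendsto (fun t : ℝ => Real.exp (-(eps * t))) atTop (𝓝 0) :=
      Real.tendsto_exp_atBot.comp h1
    simpa using h2.const_mul C
  have hEineq : ∀ t : ℝ, 0 ≤ t → u t ≤ E t ∧ lam * v t ≤ E t := by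
    intro t ht
    have h1 := hu0 t ht
    have h2 := hv0 t ht
    constructor
    · show u t ≤ u t + lam * v t
      nlinarith
    · show lam * v t ≤ u t + lam * v t
      linarith
  constructor
  · apply tendsto_of_tendsto_of_tendsto_of_le_of_le' tendsto_const_nhds (hElim (E 0))
    · filter_upwards [eventually_ge_atTop (0:ℝ)] with t ht
      exact hu0 t ht
    · filter_upwards [eventually_ge_atTop (0:ℝ)] with t ht
      exact le_trans (hEineq t ht).1 (hdecay t ht)
  · apply tendsto_of_tendsto_of_tendsto_of_le_of_le' tendsto_const_nhds (hElim (E 0 / lam))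
    · filter_upwards [eventually_ge_atTop (0:ℝ)] with t ht
      exact hv0 t ht
    · filter_upwards [eventually_ge_atTop (0:ℝ)] with t ht
      have h1 := le_trans (hEineq t ht).2 (hdecay t ht)
      rw [div_mul_eq_mul_div, le_div_iff₀ hlam0]
      linarith [h1]
end

section
/- Let q(x,λ) = det(A(x) − λI)/det(A₁₂ − λI), where A(x) is the 3×3 matrix of the linearization at a continuous positive steady state (with entries a₂₃(x) = K²/W(x)², a₃₃(x) = −d_g − K²/W(x)², other entries constant), λ₀ > 0 the positive eigenvalue of A₁₂, det(A₁₂ − λI) < 0 for λ ∈ [0, λ₀), det(A − λI) < 0 for all λ ≥ 0, and R(λ₀) = a₃₁ a₁₂ − a₃₂(a₁₁ − λ₀) < 0, with W continuous and bounded away from 0 and ∞ on [0,1]. Then there is ε > 0 such that for all λ ∈ (λ₀ − ε, λ₀), ω(λ) := min_{x∈[0,1]} q(x,λ) > 0, and ω(λ) → +∞ as λ → λ₀⁻. -/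
open Set Filter

/-- Step 1 of the instability proof: for `q(x,λ) = a₂₃(x) R(λ)/p(λ) + a₃₃(x) − λ`
with `a₂₃ ≥ c > 0`, `a₃₃` bounded, `R` continuous with `R(λ₀) < 0`, and
`p < 0` on `[0, λ₀)` with `p(λ₀) = 0`, the minimum `ω(λ) = min_x q(x,λ)` is positive
for `λ` slightly below `λ₀` and `ω(λ) → +∞` as `λ → λ₀⁻`. -/
theorem stmt18 (lam0 c Cb : ℝ) (hlam0 : 0 < lam0) (hc : 0 < c)
    (R p : ℝ → ℝ) (hR : Continuous R) (hp : Continuous p)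
    (hpneg : ∀ l ∈ Set.Ico (0:ℝ) lam0, p l < 0) (hp0 : p lam0 = 0)
    (hRlam0 : R lam0 < 0)
    (a23 a33 : ℝ → ℝ)
    (ha23 : ∀ x ∈ Set.Icc (0:ℝ) 1, c ≤ a23 x)
    (ha33 : ∀ x ∈ Set.Icc (0:ℝ) 1, |a33 x| ≤ Cb) :
    let q : ℝ → ℝ → ℝ := fun x l => a23 x * (R l / p l) + a33 x - l
    let ω : ℝ → ℝ := fun l => sInf ((fun x => q x l) '' Set.Icc (0:ℝ) 1)
    (∃ ε > 0, ∀ l ∈ Set.Ioo (lam0 - ε) lam0, 0 < ω l) ∧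
    Filter.Tendsto ω (nhdsWithin lam0 (Set.Iio lam0)) Filter.atTop := by
  intro q ω
  -- eventually l ∈ Ioo 0 lam0 within 𝓝[<] lam0
  have hIoo : Set.Ioo (0:ℝ) lam0 ∈ nhdsWithin lam0 (Set.Iio lam0) :=
    Ioo_mem_nhdsLT_of_mem ⟨hlam0, le_refl _⟩
  -- -p l tends to 0 from the right
  have hpt : Tendsto (fun l => -p l) (nhdsWithin lam0 (Set.Iio lam0)) (nhdsWithin 0 (Set.Ioi 0)) := by
    rw [tendsto_nhdsWithin_iff]
    constructor
    · have := (hp.tendsto lam0).neg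
      rw [hp0] at this
      simpa using this.mono_left nhdsWithin_le_nhds
    · filter_upwards [hIoo] with l hl
      have := hpneg l ⟨hl.1.le, hl.2⟩
      simpa using this
  have hRt : Tendsto (fun l => -R l) (nhdsWithin lam0 (Set.Iio lam0)) (nhds (-R lam0)) :=
    ((hR.tendsto lam0).neg).mono_left nhdsWithin_le_nhds
  have hinv : Tendsto (fun l => (-p l)⁻¹) (nhdsWithin lam0 (Set.Iio lam0)) atTop :=
    tendsto_inv_nhdsGT_zero.comp hpt
  have hdiv : Tendsto (fun l => R l / p l) (nhdsWithin lam0 (Set.Iio lam0)) atTop := by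
    have := hRt.pos_mul_atTop (by linarith : 0 < -R lam0) hinv
    refine this.congr fun l => ?_
    rw [← neg_div_neg_eq, div_eq_mul_inv]
  -- lower bound function
  have hg : Tendsto (fun l => c * (R l / p l) - Cb - lam0)
      (nhdsWithin lam0 (Set.Iio lam0)) atTop := by
    apply tendsto_atTop_add_const_right
    apply tendsto_atTop_add_const_right
    exact hdiv.const_mul_atTop hc
  have hev : ∀ᶠ l in nhdsWithin lam0 (Set.Iio lam0),
      c * (R l / p l) - Cb - lam0 ≤ ω l := by
    filter_upwards [self_mem_nhdsWithin, hdiv.eventually_ge_atTop 0] with l hl hr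
    apply le_csInf ((Set.nonempty_Icc.2 (by norm_num)).image _)
    rintro b ⟨x, hx, rfl⟩
    have h1 : c * (R l / p l) ≤ a23 x * (R l / p l) :=
      mul_le_mul_of_nonneg_right (ha23 x hx) hr
    have h2 : -Cb ≤ a33 x := neg_le_of_abs_le (ha33 x hx)
    have h3 : l ≤ lam0 := le_of_lt hl
    simp only [q]
    linarith
  have hω : Tendsto ω (nhdsWithin lam0 (Set.Iio lam0)) atTop :=
    tendsto_atTop_mono' _ hev hg
  refine ⟨?_, hω⟩
  have hpos : {l | 0 < ω l} ∈ nhdsWithin lam0 (Set.Iio lam0) := hω.eventually_gt_atTop 0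
  rw [mem_nhdsLT_iff_exists_Ioo_subset] at hpos
  obtain ⟨l', hl', hsub⟩ := hpos
  refine ⟨lam0 - l', by simp [Set.mem_Iio] at hl'; linarith, fun l hl => hsub ?_⟩
  have : lam0 - (lam0 - l') = l' := by ring
  rw [this] at hl
  exact hl
end
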